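/- Let α > 0 and let (α_k)_{k≥0} be a nonincreasing sequence of reals with α_k > α for all k ≥ 0 and (α_k − α)(α_{k+2} − α) ≥ (α_{k+1} − α)² for all k ≥ 0. Let ℓ ≥ 0 and let (z^k)_{k≥0} be a sequence in ℝ^s with ‖z^k‖ ≤ ℓ for all k. For k ≥ 2 define ω_k := [(1/2)(α_{k−2} − α_{k−1}) + 2α((α_{k−2} − α_{k−1})/(α_{k−1} − α) − (α_{k−1} − α_k)/(α_k − α))]‖z^k‖². Then ω_k ≥ 0 for all k ≥ 2, and for every N ≥ 2 it holds ∑_{k=2}^N ω_k ≤ ((1/2)α_0 + 2α(α_0 − α_1)/(α_1 − α))ℓ²; in particular the series ∑_{k≥2} ω_k converges and ω_k → 0 as k → +∞. -/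

import Mathlib

open Filter

/-- Under the step-size conditions on `(α_k)` and boundedness of `(z^k)`,
the quantities `ω_k` are nonnegative, their partial sums from `k = 2` are bounded by
`((1/2)α_0 + 2α(α_0 − α_1)/(α_1 − α))ℓ²`, the series `∑_{k ≥ 2} ω_k` converges, and
`ω_k → 0`. -/
theorem stmt_7 (s : ℕ) (α ℓ : ℝ) (hα : 0 < α) (hℓ : 0 ≤ ℓ)
    (a : ℕ → ℝ) (hmono : ∀ k, a (k + 1) ≤ a k) (hgt : ∀ k, α < a k)
    (hlog : ∀ k, (a k - α) * (a (k + 2) - α) ≥ (a (k + 1) - α) ^ 2)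
    (z : ℕ → EuclideanSpace ℝ (Fin s)) (hz : ∀ k, ‖z k‖ ≤ ℓ)
    (ω : ℕ → ℝ)
    (hω : ∀ k, 2 ≤ k → ω k =
      ((1 / 2) * (a (k - 2) - a (k - 1)) +
        2 * α * ((a (k - 2) - a (k - 1)) / (a (k - 1) - α) -
          (a (k - 1) - a k) / (a k - α))) * ‖z k‖ ^ 2) :
    (∀ k, 2 ≤ k → 0 ≤ ω k) ∧
    (∀ N, 2 ≤ N → ∑ k ∈ Finset.Icc 2 N, ω k ≤
      ((1 / 2) * a 0 + 2 * α * (a 0 - a 1) / (a 1 - α)) * ℓ ^ 2) ∧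
    Summable (fun k => ω (k + 2)) ∧
    Tendsto ω atTop (nhds 0) := by
  have hb : ∀ k, 0 < a k - α := fun k => by linarith [hgt k]
  set c : ℕ → ℝ := fun k => (a k - a (k + 1)) / (a (k + 1) - α) with hc
  have hcnn : ∀ k, 0 ≤ c k := fun k =>
    div_nonneg (by linarith [hmono k]) (hb (k + 1)).le
  have hcmono : ∀ k, c (k + 1) ≤ c k := by
    intro k
    have h := hlog k
    have hk1 := hb (k + 1); have hk2 := hb (k + 2); have hk0 := hb k
    have key : (a (k + 1) - α) / (a (k + 2) - α) ≤ (a k - α) / (a (k + 1) - α) := by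
      rw [div_le_div_iff₀ hk2 hk1]
      nlinarith [h]
    have e1 : c k = (a k - α) / (a (k + 1) - α) - 1 := by
      field_simp [hc]
      simp only [hc]; rw [div_mul_cancel₀ _ hk1.ne']; ring
    have e2 : c (k + 1) = (a (k + 1) - α) / (a (k + 2) - α) - 1 := by
      field_simp [hc]
      simp only [hc]; rw [div_mul_cancel₀ _ hk2.ne']; ring
    rw [e1, e2]; linarith
  set B : ℕ → ℝ := fun k => (1 / 2) * (a k - a (k + 1)) + 2 * α * (c k - c (k + 1)) with hB
  have hBnn : ∀ k, 0 ≤ B k := by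
    intro k
    have := hmono k; have := hcmono k
    have h2 : 0 ≤ 2 * α * (c k - c (k + 1)) :=
      mul_nonneg (by linarith) (by linarith [hcmono k])
    simp only [hB]; nlinarith [hmono k]
  have hωeq : ∀ k, ω (k + 2) = B k * ‖z (k + 2)‖ ^ 2 := by
    intro k
    have h := hω (k + 2) (by omega)
    simpa [show k + 2 - 2 = k by omega, show k + 2 - 1 = k + 1 by omega, hB, hc] using h
  set g : ℕ → ℝ := fun k => (1 / 2) * a k + 2 * α * c k with hg
  have hgnn : ∀ k, 0 ≤ g k := by
    intro k
    have := (hgt k); have := hcnn k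
    have : 0 ≤ 2 * α * c k := by positivity
    simp only [hg]; nlinarith [hgt k, hα]
  have hsumB : ∀ n, ∑ i ∈ Finset.range n, B i = g 0 - g n := by
    intro n
    have : ∀ i, B i = g i - g (i + 1) := by intro i; simp only [hB, hg]; ring
    simp only [this]
    exact Finset.sum_range_sub' g n
  -- partial sums of ω (· + 2) bounded by g 0 * ℓ ^ 2
  have hpart : ∀ n, ∑ i ∈ Finset.range n, ω (i + 2) ≤ g 0 * ℓ ^ 2 := by
    intro n
    have h1 : ∑ i ∈ Finset.range n, ω (i + 2) ≤ ∑ i ∈ Finset.range n, B i * ℓ ^ 2 := by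
      apply Finset.sum_le_sum
      intro i _
      rw [hωeq i]
      apply mul_le_mul_of_nonneg_left _ (hBnn i)
      have := hz (i + 2)
      nlinarith [norm_nonneg (z (i + 2))]
    have h2 : ∑ i ∈ Finset.range n, B i * ℓ ^ 2 = (g 0 - g n) * ℓ ^ 2 := by
      rw [← Finset.sum_mul, hsumB]
    have h3 : (g 0 - g n) * ℓ ^ 2 ≤ g 0 * ℓ ^ 2 := by
      have := hgnn n
      nlinarith [sq_nonneg ℓ]
    linarith
  have hg0 : g 0 = (1 / 2) * a 0 + 2 * α * (a 0 - a 1) / (a 1 - α) := by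
    simp only [hg, hc]; ring
  have hωnn : ∀ k, 2 ≤ k → 0 ≤ ω k := by
    intro k hk
    obtain ⟨m, rfl⟩ : ∃ m, k = m + 2 := ⟨k - 2, by omega⟩
    rw [hωeq]
    exact mul_nonneg (hBnn m) (sq_nonneg _)
  have hsummable : Summable (fun k => ω (k + 2)) := by
    apply summable_of_sum_range_le (fun k => hωnn (k + 2) (by omega)) hpart
  refine ⟨hωnn, ?_, hsummable, ?_⟩
  · intro N hN
    rw [← hg0]
    have : ∑ k ∈ Finset.Icc 2 N, ω k = ∑ i ∈ Finset.range (N + 1 - 2), ω (2 + i) := by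
      rw [← Finset.Ico_add_one_right_eq_Icc, Finset.sum_Ico_eq_sum_range]
    rw [this]
    have := hpart (N + 1 - 2)
    simpa [Nat.add_comm] using this
  · have h := hsummable.tendsto_atTop_zero
    exact (tendsto_add_atTop_iff_nat 2).mp h
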